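/- Let P be a finite partially ordered set with a greatest element ⊤, let Λ be a finite set equipped with a map π : Λ → P, and let w be a function assigning an integer to every pair (τ, λ) consisting of a chain τ ⊆ P with ⊤ ∈ τ and an element λ ∈ Λ. Then Σ_σ (−1)^{card σ} Σ_{λ ∈ Λ, π(λ) ≤ min σ} w(σ ∪ {π(λ)}, λ) = Σ_{λ ∈ Λ, π(λ) < ⊤} w({π(λ), ⊤}, λ), where the outer sum on the left ranges over all chains σ ⊆ P whose greatest element is ⊤ and which have at least two elements, and min σ denotes the least element of σ. -/

import Mathlib

open Finset in
open scoped Classical in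
/-- The combinatorial cancellation identity underlying Theorem D:
for a finite poset `P` with greatest element `⊤`, a finite set `Λ` with a map
`π : Λ → P`, and a weight `w` on pairs (chain containing `⊤`, element of `Λ`),
the alternating sum over chains `σ` with greatest element `⊤` and at least two
elements of the inner sums over `l` with `π l ≤ min σ` of `w (σ ∪ {π l}) l`
equals the sum over `l` with `π l < ⊤` of `w {π l, ⊤} l`. -/
theorem alternating_sum_chains {P : Type*} [PartialOrder P] [OrderTop P] [Fintype P]
    [DecidableEq P] {Λ : Type*} [Fintype Λ] (π : Λ → P) (w : Finset P → Λ → ℤ) :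
    (∑ σ ∈ univ.filter (fun σ : Finset P =>
        IsChain (· ≤ ·) (σ : Set P) ∧ ⊤ ∈ σ ∧ 2 ≤ σ.card),
      (-1 : ℤ) ^ σ.card *
        ∑ l ∈ univ.filter (fun l : Λ => ∀ x ∈ σ, π l ≤ x), w (insert (π l) σ) l)
    = ∑ l ∈ univ.filter (fun l : Λ => π l < ⊤), w ({π l, ⊤} : Finset P) l := by
  classical
  set S : Finset (Finset P) := univ.filter (fun σ : Finset P =>
      IsChain (· ≤ ·) (σ : Set P) ∧ ⊤ ∈ σ ∧ 2 ≤ σ.card) with hS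
  set t : Finset P → Finset Λ := fun σ => univ.filter (fun l : Λ => ∀ x ∈ σ, π l ≤ x) with ht
  set F : (Σ _ : Finset P, Λ) → ℤ :=
    fun x => (-1 : ℤ) ^ x.1.card * w (insert (π x.2) x.1) x.2 with hF
  have hstep : (∑ σ ∈ S, (-1 : ℤ) ^ σ.card * ∑ l ∈ t σ, w (insert (π l) σ) l)
      = ∑ x ∈ S.sigma t, F x := by
    rw [Finset.sum_sigma]
    exact Finset.sum_congr rfl fun σ _ => by rw [Finset.mul_sum]
  rw [hstep]
  have hmem : ∀ x : (Σ _ : Finset P, Λ), x ∈ S.sigma t ↔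
      (IsChain (· ≤ ·) (x.1 : Set P) ∧ ⊤ ∈ x.1 ∧ 2 ≤ x.1.card) ∧ ∀ y ∈ x.1, π x.2 ≤ y := by
    intro x
    simp [Finset.mem_sigma, hS, ht]
  have hlt : ∀ x : (Σ _ : Finset P, Λ), x ∈ S.sigma t → π x.2 < ⊤ := by
    intro x hx
    rw [hmem] at hx
    obtain ⟨⟨hc, htop, hcard⟩, hle⟩ := hx
    rcases lt_or_eq_of_le (le_top : π x.2 ≤ ⊤) with h | h
    · exact h
    · exfalso
      have hsub : x.1 ⊆ {⊤} := by
        intro y hy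
        have := hle y hy
        rw [h] at this
        simp [top_le_iff.mp this]
      have := Finset.card_le_card hsub
      simp at this
      omega
  set U : (Σ _ : Finset P, Λ) → Prop := fun x => π x.2 ∈ x.1 ∧ x.1.card = 2 with hU
  rw [← Finset.sum_filter_add_sum_filter_not (S.sigma t) U F]
  set T : Finset (Σ _ : Finset P, Λ) := (S.sigma t).filter (fun x => ¬ U x) with hT
  set g : (Σ _ : Finset P, Λ) → (Σ _ : Finset P, Λ) := fun x =>
    if π x.2 ∈ x.1 then ⟨x.1.erase (π x.2), x.2⟩ else ⟨insert (π x.2) x.1, x.2⟩ with hg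
  have hmemT : ∀ x : (Σ _ : Finset P, Λ), x ∈ T ↔
      ((IsChain (· ≤ ·) (x.1 : Set P) ∧ ⊤ ∈ x.1 ∧ 2 ≤ x.1.card) ∧ (∀ y ∈ x.1, π x.2 ≤ y))
        ∧ ¬ (π x.2 ∈ x.1 ∧ x.1.card = 2) := by
    intro x
    rw [hT, Finset.mem_filter, hmem, hU]
  have hltT : ∀ x : (Σ _ : Finset P, Λ), x ∈ T → π x.2 < ⊤ := by
    intro x hx
    exact hlt x (Finset.mem_filter.mp hx).1
  have g_mem : ∀ x ∈ T, g x ∈ T := by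
    rintro ⟨σ, l⟩ hx
    have hlt' := hltT _ hx
    rw [hmemT] at hx
    dsimp only at hx hlt' ⊢
    obtain ⟨⟨⟨hc, htop, hcard⟩, hle⟩, hnu⟩ := hx
    by_cases hin : π l ∈ σ
    · have hcard3 : 3 ≤ σ.card := by
        rcases Nat.lt_or_ge σ.card 3 with h | h
        · exact absurd ⟨hin, by omega⟩ hnu
        · exact h
      simp only [hg, hin, if_true]
      rw [hmemT]
      refine ⟨⟨⟨hc.mono (Finset.coe_subset.mpr (Finset.erase_subset _ _)), ?_, ?_⟩,
        fun y hy => hle y (Finset.mem_of_mem_erase hy)⟩, ?_⟩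
      · exact Finset.mem_erase.mpr ⟨fun h => hlt'.ne h.symm, htop⟩
      · rw [Finset.card_erase_of_mem hin]; omega
      · simp [Finset.notMem_erase]
    · simp only [hg, hin, if_false]
      rw [hmemT]
      refine ⟨⟨⟨?_, Finset.mem_insert_of_mem htop, ?_⟩, ?_⟩, ?_⟩
      · rw [Finset.coe_insert]
        exact hc.insert (fun y hy _ => Or.inl (hle y hy))
      · rw [Finset.card_insert_of_notMem hin]; omega
      · intro y hy
        rcases Finset.mem_insert.mp hy with h | h
        · exact h ▸ le_refl _
        · exact hle y h
      · intro ⟨_, h2⟩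
        rw [Finset.card_insert_of_notMem hin] at h2
        omega
  have h1 : ∀ x ∈ T, F x + F (g x) = 0 := by
    rintro ⟨σ, l⟩ hx
    rw [hmemT] at hx
    dsimp only at hx ⊢
    obtain ⟨⟨⟨hc, htop, hcard⟩, hle⟩, hnu⟩ := hx
    by_cases hin : π l ∈ σ
    · simp only [hg, hF, hin, if_true]
      rw [Finset.insert_erase hin, Finset.insert_eq_self.mpr hin,
        Finset.card_erase_of_mem hin]
      obtain ⟨m, hm⟩ : ∃ m, σ.card = m + 1 := ⟨σ.card - 1, by omega⟩
      rw [hm]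
      simp only [Nat.add_sub_cancel, pow_succ]
      ring
    · simp only [hg, hF, hin, if_false]
      rw [Finset.insert_idem, Finset.card_insert_of_notMem hin, pow_succ]
      ring
  have h3 : ∀ x ∈ T, g x ≠ x := by
    rintro ⟨σ, l⟩ hx
    rw [hmemT] at hx
    dsimp only at hx ⊢
    obtain ⟨⟨⟨hc, htop, hcard⟩, hle⟩, hnu⟩ := hx
    by_cases hin : π l ∈ σ
    · simp only [hg, hin, if_true]
      intro h
      have h1' : σ.erase (π l) = σ := congrArg Sigma.fst h
      have := Finset.card_erase_of_mem hin
      rw [h1'] at this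
      omega
    · simp only [hg, hin, if_false]
      intro h
      have h1' : insert (π l) σ = σ := congrArg Sigma.fst h
      exact hin (h1' ▸ Finset.mem_insert_self _ _)
  have h4 : ∀ x ∈ T, g (g x) = x := by
    rintro ⟨σ, l⟩ _
    by_cases hin : π l ∈ σ
    · simp only [hg, hin, if_true, Finset.notMem_erase, if_false, Finset.insert_erase hin]
    · simp only [hg, hin, if_false, Finset.mem_insert_self, if_true, Finset.erase_insert hin]
  have hzero : ∑ x ∈ T, F x = 0 :=
    Finset.sum_involution (fun x _ => g x) (fun a ha => h1 a ha) (fun a ha _ => h3 a ha)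
      (fun a ha => g_mem a ha) (fun a ha => h4 a ha)
  rw [hzero, add_zero]
  -- the unmatched part equals the right-hand side
  have key : ∀ x : (Σ _ : Finset P, Λ), x ∈ (S.sigma t).filter U →
      π x.2 < ⊤ ∧ x.1 = ({π x.2, ⊤} : Finset P) := by
    rintro ⟨σ, l⟩ hx
    have hm := Finset.mem_filter.mp hx
    have hlt' := hlt _ hm.1
    have hUx := hm.2
    rw [hU] at hUx
    dsimp only at hUx
    obtain ⟨hin, hcard2⟩ := hUx
    have hmem' := (hmem _).mp hm.1
    dsimp only at hmem'
    obtain ⟨⟨hc, htop, hcard⟩, hle⟩ := hmem'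
    refine ⟨hlt', ?_⟩
    have hsub : ({π l, ⊤} : Finset P) ⊆ σ := by
      intro y hy
      rcases Finset.mem_insert.mp hy with h | h
      · exact h ▸ hin
      · rw [Finset.mem_singleton] at h; exact h ▸ htop
    have hcardeq : ({π l, ⊤} : Finset P).card = 2 := by
      rw [Finset.card_insert_of_notMem (by simp [hlt'.ne]), Finset.card_singleton]
    exact (Finset.eq_of_subset_of_card_le hsub (by omega)).symm
  refine Finset.sum_nbij' (fun x => x.2) (fun l => ⟨({π l, ⊤} : Finset P), l⟩) ?_ ?_ ?_ ?_ ?_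
  · intro x hx
    simp only [Finset.mem_filter, Finset.mem_univ, true_and]
    exact (key x hx).1
  · intro l hl
    simp only [Finset.mem_filter, Finset.mem_univ, true_and] at hl
    have hne : π l ≠ ⊤ := hl.ne
    have hcardeq : ({π l, ⊤} : Finset P).card = 2 := by
      rw [Finset.card_insert_of_notMem (by simp [hne]), Finset.card_singleton]
    rw [Finset.mem_filter, hmem]
    refine ⟨⟨⟨?_, ?_, ?_⟩, ?_⟩, ?_⟩
    · intro a ha b hb hab
      simp only [Finset.coe_insert, Finset.coe_singleton, Set.mem_insert_iff,
        Set.mem_singleton_iff] at ha hb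
      rcases ha with rfl | rfl <;> rcases hb with rfl | rfl
      · exact Or.inl le_rfl
      · exact Or.inl le_top
      · exact Or.inr le_top
      · exact Or.inl le_rfl
    · simp
    · dsimp only; omega
    · intro y hy
      rcases Finset.mem_insert.mp hy with h | h
      · exact h ▸ le_refl _
      · rw [Finset.mem_singleton] at h; rw [h]; exact le_top
    · rw [hU]
      exact ⟨Finset.mem_insert_self _ _, hcardeq⟩
  · intro x hx
    obtain ⟨_, heq⟩ := key x hx
    obtain ⟨σ, l⟩ := x
    simp only at heq
    rw [heq]
  · intro l hl
    rfl
  · intro x hx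
    obtain ⟨hlt', heq⟩ := key x hx
    obtain ⟨σ, l⟩ := x
    simp only at heq hlt'
    have hcardeq : ({π l, ⊤} : Finset P).card = 2 := by
      rw [Finset.card_insert_of_notMem (by simp [hlt'.ne]), Finset.card_singleton]
    simp only [hF, heq, hcardeq, Finset.insert_idem]
    norm_num
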